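/- Let P_t be a semigroup on C_b(X) with ‖P_t‖ ≤ M for all t (β ≤ 0 case), (t,x) ↦ P_t f(x) continuous, and generator L. For f ∈ C_b(X) and α ∈ (0,1), if sup_{t>0} t^{−α}‖P_t f − f‖_∞ < ∞ then sup_{λ>0} ‖λ^α L R(λ,L) f‖_∞ ≤ Γ(α+1) · sup_{t>0} t^{−α}‖P_t f − f‖_∞. -/

import Mathlib

open MeasureTheory Set BoundedContinuousFunction

/-- For a bounded semigroup P_t on C_b(X) (case β ≤ 0 : ‖P_t‖ ≤ M) with generator L:
if sup_{t>0} t^{-α}‖P_t f − f‖_∞ ≤ K then for every λ > 0,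
‖λ^α L R(λ,L) f‖_∞ = λ^α ‖λR(λ,L)f − f‖_∞ ≤ Γ(α+1) K. -/
theorem stmt12 (X : Type) [NormedAddCommGroup X] [NormedSpace ℝ X]
    (P : ℝ → (X →ᵇ ℝ) →L[ℝ] (X →ᵇ ℝ)) (M : ℝ) (hM : 0 < M)
    (hP0 : P 0 = ContinuousLinearMap.id ℝ (X →ᵇ ℝ))
    (hsem : ∀ s t : ℝ, 0 ≤ s → 0 ≤ t → P (s + t) = (P s).comp (P t))
    (hbound : ∀ t : ℝ, 0 ≤ t → ‖P t‖ ≤ M)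
    (hcont : ∀ f : X →ᵇ ℝ,
      ContinuousOn (fun p : ℝ × X => P p.1 f p.2) (Set.Ici 0 ×ˢ Set.univ))
    (D : Set (X →ᵇ ℝ)) (L : (X →ᵇ ℝ) → (X →ᵇ ℝ))
    (R : ℝ → (X →ᵇ ℝ) →L[ℝ] (X →ᵇ ℝ))
    (hR : ∀ l : ℝ, 0 < l → ∀ f : X →ᵇ ℝ, ∀ x : X,
      R l f x = ∫ t in Set.Ioi (0:ℝ), Real.exp (-l * t) * P t f x)
    (hRD : ∀ l : ℝ, 0 < l → ∀ f : X →ᵇ ℝ, R l f ∈ D ∧ l • R l f - L (R l f) = f)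
    (hLR : ∀ l : ℝ, 0 < l → ∀ g ∈ D, R l (l • g - L g) = g)
    (α : ℝ) (hα : α ∈ Set.Ioo (0:ℝ) 1) (f : X →ᵇ ℝ) (K : ℝ)
    (hK : ∀ t : ℝ, 0 < t → ‖P t f - f‖ ≤ K * t ^ α) :
    ∀ l : ℝ, 0 < l → l ^ α * ‖l • R l f - f‖ ≤ Real.Gamma (α + 1) * K := by
  obtain ⟨hα0, hα1⟩ := hα
  have hK0 : 0 ≤ K := by
    have h1 := hK 1 one_pos
    have : (0:ℝ) ≤ K * 1 ^ α := le_trans (norm_nonneg _) h1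
    simpa using this
  intro l hl
  -- integrability of exp(-l t) on Ioi 0
  have hIexp : IntegrableOn (fun t : ℝ => Real.exp (-l * t)) (Ioi 0) :=
    exp_neg_integrableOn_Ioi 0 hl
  -- integrability of t^α exp(-l t) on Ioi 0
  have hIpow : IntegrableOn (fun t : ℝ => t ^ α * Real.exp (-(l * t))) (Ioi 0) := by
    have := integrableOn_rpow_mul_exp_neg_mul_rpow (p := 1) (s := α) (b := l)
      (by linarith) one_pos hl
    refine this.congr_fun (fun t ht => ?_) measurableSet_Ioi
    beta_reduce; rw [Real.rpow_one, neg_mul]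
  -- ∫ exp(-(l t)) = 1/l
  have hI1 : (∫ t in Ioi (0:ℝ), Real.exp (-(l * t))) = 1 / l := by
    have := Real.integral_rpow_mul_exp_neg_mul_Ioi (a := 1) one_pos hl
    simp only [Real.rpow_one, sub_self, Real.Gamma_one, mul_one] at this
    rw [← this]
    refine setIntegral_congr_fun measurableSet_Ioi (fun t ht => ?_)
    rw [Real.rpow_zero, one_mul]
  -- ∫ t^α exp(-(l t)) = (1/l)^(α+1) Γ(α+1)
  have hI2 : (∫ t in Ioi (0:ℝ), t ^ α * Real.exp (-(l * t)))
      = (1 / l) ^ (α + 1) * Real.Gamma (α + 1) := by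
    have := Real.integral_rpow_mul_exp_neg_mul_Ioi (a := α + 1) (by linarith) hl
    simpa using this
  -- continuity in t of P t f x for fixed x
  have hPc : ∀ x : X, ContinuousOn (fun t : ℝ => P t f x) (Ioi 0) := by
    intro x
    have : ContinuousOn (fun t : ℝ => P t f x) (Ici 0) := by
      have h := hcont f
      exact h.comp ((continuous_id.prodMk continuous_const).continuousOn)
        (fun t ht => ⟨ht, mem_univ x⟩)
    exact this.mono Ioi_subset_Ici_self
  -- integrability of exp(-l t) * P t f x
  have hIP : ∀ x : X,
      IntegrableOn (fun t : ℝ => Real.exp (-l * t) * P t f x) (Ioi 0) := by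
    intro x
    refine Integrable.mono' (hIexp.const_mul (M * ‖f‖)) ?_ ?_
    · exact ((Real.continuous_exp.comp (continuous_const.mul continuous_id)).continuousOn.mul
        (hPc x)).aestronglyMeasurable measurableSet_Ioi
    · filter_upwards [self_mem_ae_restrict measurableSet_Ioi] with t ht
      have h1 : |P t f x| ≤ ‖P t f‖ := (P t f).norm_coe_le_norm x
      have h2 : ‖P t f‖ ≤ M * ‖f‖ :=
        le_trans ((P t).le_opNorm f) (by
          have := hbound t (le_of_lt ht)
          exact mul_le_mul_of_nonneg_right this (norm_nonneg f))
      rw [norm_mul, Real.norm_eq_abs (Real.exp _), abs_of_pos (Real.exp_pos _)]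
      calc Real.exp (-l * t) * ‖P t f x‖ ≤ Real.exp (-l * t) * (M * ‖f‖) := by
            apply mul_le_mul_of_nonneg_left _ (Real.exp_pos _).le
            exact le_trans h1 h2
        _ = M * ‖f‖ * Real.exp (-l * t) := by ring
  -- integrability of exp(-l t) * f x
  have hIf : ∀ x : X,
      IntegrableOn (fun t : ℝ => Real.exp (-l * t) * f x) (Ioi 0) := by
    intro x
    exact hIexp.mul_const _
  -- pointwise bound
  have key : ∀ x : X, ‖(l • R l f - f) x‖ ≤ l * (K * ((1 / l) ^ (α + 1) * Real.Gamma (α + 1))) := by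
    intro x
    have hfx : f x = l * ∫ t in Ioi (0:ℝ), Real.exp (-l * t) * f x := by
      rw [integral_mul_const]
      have : (∫ t in Ioi (0:ℝ), Real.exp (-l * t)) = 1 / l := by
        rw [← hI1]
        refine setIntegral_congr_fun measurableSet_Ioi (fun t ht => ?_)
        rw [neg_mul]
      rw [this]
      field_simp
    have hval : (l • R l f - f) x
        = l * ∫ t in Ioi (0:ℝ), Real.exp (-l * t) * (P t f x - f x) := by
      have : (l • R l f - f) x = l * (R l f x) - f x := by
        simp only [BoundedContinuousFunction.coe_sub, BoundedContinuousFunction.coe_smul,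
          Pi.sub_apply, Pi.smul_apply, smul_eq_mul]
      have hsub : (∫ t in Ioi (0:ℝ), Real.exp (-l * t) * (P t f x - f x))
          = (∫ t in Ioi (0:ℝ), Real.exp (-l * t) * P t f x)
            - ∫ t in Ioi (0:ℝ), Real.exp (-l * t) * f x := by
        rw [← integral_sub (hIP x) (hIf x)]
        refine setIntegral_congr_fun measurableSet_Ioi (fun t ht => ?_)
        ring
      rw [this, hR l hl f x, hsub, mul_sub, ← hfx]
    rw [hval]
    rw [norm_mul, Real.norm_eq_abs l, abs_of_pos hl]
    refine mul_le_mul_of_nonneg_left ?_ hl.le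
    rw [← hI2]
    calc ‖∫ t in Ioi (0:ℝ), Real.exp (-l * t) * (P t f x - f x)‖
        ≤ ∫ t in Ioi (0:ℝ), K * (t ^ α * Real.exp (-(l * t))) := by
          refine norm_integral_le_of_norm_le (hIpow.const_mul K) ?_
          filter_upwards [self_mem_ae_restrict measurableSet_Ioi] with t ht
          rw [norm_mul, Real.norm_eq_abs (Real.exp _), abs_of_pos (Real.exp_pos _)]
          have h1 : ‖P t f x - f x‖ ≤ ‖P t f - f‖ := by
            have := (P t f - f).norm_coe_le_norm x
            simpa using this
          have h2 : ‖P t f x - f x‖ ≤ K * t ^ α := le_trans h1 (hK t ht)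
          calc Real.exp (-l * t) * ‖P t f x - f x‖
              ≤ Real.exp (-l * t) * (K * t ^ α) :=
                mul_le_mul_of_nonneg_left h2 (Real.exp_pos _).le
            _ = K * (t ^ α * Real.exp (-(l * t))) := by rw [neg_mul]; ring
      _ = K * ∫ t in Ioi (0:ℝ), t ^ α * Real.exp (-(l * t)) := by
          rw [integral_const_mul]
  -- conclude
  have hC : 0 ≤ l * (K * ((1 / l) ^ (α + 1) * Real.Gamma (α + 1))) := by
    have hg : 0 ≤ Real.Gamma (α + 1) := Real.Gamma_nonneg_of_nonneg (by linarith)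
    have : (0:ℝ) ≤ (1 / l) ^ (α + 1) := Real.rpow_nonneg (by positivity) _
    positivity
  have hnorm : ‖l • R l f - f‖ ≤ l * (K * ((1 / l) ^ (α + 1) * Real.Gamma (α + 1))) :=
    (BoundedContinuousFunction.norm_le hC).2 key
  calc l ^ α * ‖l • R l f - f‖
      ≤ l ^ α * (l * (K * ((1 / l) ^ (α + 1) * Real.Gamma (α + 1)))) := by
        apply mul_le_mul_of_nonneg_left hnorm (Real.rpow_nonneg hl.le α)
    _ = Real.Gamma (α + 1) * K := by
        have h1 : (1 / l : ℝ) ^ (α + 1) = (l ^ α * l)⁻¹ := by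
          rw [one_div, ← Real.rpow_add_one hl.ne' α, ← Real.inv_rpow hl.le]
        rw [h1]
        have h2 : l ^ α ≠ 0 := (Real.rpow_pos_of_pos hl α).ne'
        field_simp
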